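/- Assume the reference interface data p_{0,2} < κ < p_{0,1}, u_{0,2} < u_{0,1} with (p_{0,1} − p_{0,2})(𝒯^i(p_{0,2}) − 1) = (u_{0,1} − u_{0,2})², and the ε-approximate reference data (p_{0,1}^ε, u_{0,1}^ε) = (p_{0,1}, u_{0,1}), (p_{0,2}^ε, u_{0,2}^ε) with p_{0,2}^ε < κ, p_{0,2}^ε → p_{0,2}, u_{0,2}^ε = u_{0,1} − √((𝒯_ε(p_{0,2}^ε) − 𝒯_ε(p_{0,1}))(p_{0,1} − p_{0,2}^ε)). Then there exist δ > 0, ε̄ > 0 and C > 0 such that for every 0 < ε < ε̄ and every pair of states U^ℓ = (p^ℓ, u^ℓ) with |p^ℓ − p_{0,1}^ε| < δ, |u^ℓ − u_{0,1}^ε| < δ and U^r = (p^r, u^r) with |p^r − p_{0,2}^ε| < δ, |u^r − u_{0,2}^ε| < δ, there exists a unique pair of wave strengths (σ₁, σ₂) with |σ₁| ≤ Cδ and σ₂ < 0 such that U^r = Φ₂^ε(σ₂)(Φ₁^ε(σ₁)(U^ℓ)) and the intermediate state Φ₁^ε(σ₁)(U^ℓ) has pressure greater than κ (i.e. the Riemann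 problem across the congested/free interface is uniquely solved by a 1-wave in the congested region followed by a 2-shock interface). -/

import Mathlib

open Set Filter MeasureTheory Topology

/-- The singular pressure law `𝒫_ε(τ) = κ τ^{-γᵢ} + ε (τ-1)^{-γ_c}`. -/
noncomputable def Pe (κ γi γc ε τ : ℝ) : ℝ := κ * τ ^ (-γi) + ε * (τ - 1) ^ (-γc)

noncomputable def PeD (κ γi γc ε τ : ℝ) : ℝ :=
  κ * (-γi * τ ^ (-γi - 1)) + ε * (-γc * (τ - 1) ^ (-γc - 1))

lemma sqrt_diff_le {gmin x y : ℝ} (hg : 0 < gmin) (hx : gmin ≤ x) (hy : gmin ≤ y) :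
    |Real.sqrt x - Real.sqrt y| ≤ |x - y| / (2 * Real.sqrt gmin) := by
  have hgm : 0 < Real.sqrt gmin := Real.sqrt_pos.2 hg
  have h1 : Real.sqrt gmin ≤ Real.sqrt x := Real.sqrt_le_sqrt hx
  have h2 : Real.sqrt gmin ≤ Real.sqrt y := Real.sqrt_le_sqrt hy
  have hx2 : Real.sqrt x ^ 2 = x := Real.sq_sqrt (hg.le.trans hx)
  have hy2 : Real.sqrt y ^ 2 = y := Real.sq_sqrt (hg.le.trans hy)
  have key : |x - y| = |Real.sqrt x - Real.sqrt y| * (Real.sqrt x + Real.sqrt y) := by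
    rw [← abs_of_nonneg (by linarith : (0:ℝ) ≤ Real.sqrt x + Real.sqrt y), ← abs_mul]
    congr 1; nlinarith
  rw [le_div_iff₀ (by linarith : (0:ℝ) < 2 * Real.sqrt gmin), key]
  exact mul_le_mul_of_nonneg_left (by linarith) (abs_nonneg _)

lemma sqrt_sub_ge {gmax x y d : ℝ} (hy : 0 ≤ y) (hd : y + d ≤ x) (hd0 : 0 ≤ d)
    (hx : 0 < x) (hxm : x ≤ gmax) :
    d / (2 * Real.sqrt gmax) ≤ Real.sqrt x - Real.sqrt y := by
  have hgm : 0 < Real.sqrt gmax := Real.sqrt_pos.2 (lt_of_lt_of_le hx hxm)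
  have hsx : 0 < Real.sqrt x := Real.sqrt_pos.2 hx
  have hsy : 0 ≤ Real.sqrt y := Real.sqrt_nonneg y
  have hx2 : Real.sqrt x ^ 2 = x := Real.sq_sqrt hx.le
  have hy2 : Real.sqrt y ^ 2 = y := Real.sq_sqrt hy
  have h1 : Real.sqrt x ≤ Real.sqrt gmax := Real.sqrt_le_sqrt hxm
  have h2 : Real.sqrt y ≤ Real.sqrt gmax :=
    le_trans (Real.sqrt_le_sqrt (by linarith)) h1
  rw [div_le_iff₀ (by linarith : (0:ℝ) < 2 * Real.sqrt gmax)]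
  nlinarith

lemma hasDerivAt_Pe {κ γi γc ε τ : ℝ} (hτ : 1 < τ) :
    HasDerivAt (Pe κ γi γc ε) (PeD κ γi γc ε τ) τ := by
  have h1 : HasDerivAt (fun τ : ℝ => τ ^ (-γi)) (-γi * τ ^ (-γi - 1)) τ :=
    Real.hasDerivAt_rpow_const (Or.inl (by linarith))
  have hs : HasDerivAt (fun τ : ℝ => τ - 1) 1 τ := (hasDerivAt_id τ).sub_const 1
  have h2' : HasDerivAt (fun x : ℝ => x ^ (-γc)) (-γc * (τ - 1) ^ (-γc - 1)) (τ - 1) :=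
    Real.hasDerivAt_rpow_const (Or.inl (by linarith))
  have h2 : HasDerivAt (fun τ : ℝ => (τ - 1) ^ (-γc)) (-γc * (τ - 1) ^ (-γc - 1)) τ := by
    simpa [Function.comp_def] using h2'.comp τ hs
  rw [show Pe κ γi γc ε = fun τ => κ * τ ^ (-γi) + ε * (τ - 1) ^ (-γc) from rfl]
  simpa [Pe, PeD, Pi.add_def] using (h1.const_mul κ).add (h2.const_mul ε)

lemma PeD_neg {κ γi γc ε τ : ℝ} (hκ : 0 < κ) (hγi : 0 < γi) (hγc : 0 < γc)
    (hε : 0 < ε) (hτ : 1 < τ) : PeD κ γi γc ε τ < 0 := by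
  have p1 : 0 < τ ^ (-γi - 1) := Real.rpow_pos_of_pos (by linarith) _
  have p2 : 0 < (τ - 1) ^ (-γc - 1) := Real.rpow_pos_of_pos (by linarith) _
  have : 0 < κ * (γi * τ ^ (-γi - 1)) + ε * (γc * (τ - 1) ^ (-γc - 1)) := by positivity
  simp only [PeD]; nlinarith

lemma Pe_pos {κ γi γc ε τ : ℝ} (hκ : 0 < κ) (hε : 0 < ε) (hτ : 1 < τ) :
    0 < Pe κ γi γc ε τ := by
  have p1 : 0 < τ ^ (-γi) := Real.rpow_pos_of_pos (by linarith) _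
  have p2 : 0 < (τ - 1) ^ (-γc) := Real.rpow_pos_of_pos (by linarith) _
  simp only [Pe]; positivity

lemma Pe_strictAntiOn {κ γi γc ε : ℝ} (hκ : 0 < κ) (hγi : 0 < γi) (hγc : 0 < γc)
    (hε : 0 < ε) : StrictAntiOn (Pe κ γi γc ε) (Ioi 1) := by
  apply strictAntiOn_of_deriv_neg (convex_Ioi 1)
  · exact fun τ hτ => (hasDerivAt_Pe hτ).continuousAt.continuousWithinAt
  · intro τ hτ
    rw [interior_Ioi] at hτ
    rw [(hasDerivAt_Pe hτ).deriv]
    exact PeD_neg hκ hγi hγc hε hτ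

lemma Pe_anti_le {κ γi γc ε a b : ℝ} (hκ : 0 < κ) (hγi : 0 < γi) (hγc : 0 < γc)
    (hε : 0 < ε) (ha : 1 < a) (hab : a ≤ b) : Pe κ γi γc ε b ≤ Pe κ γi γc ε a := by
  rcases eq_or_lt_of_le hab with rfl | h
  · exact le_rfl
  · exact (Pe_strictAntiOn hκ hγi hγc hε ha (lt_trans ha h) h).le


lemma rpow_inv_exp_neg {x c : ℝ} (hx : 0 < x) (hc : 0 < c) :
    (x ^ (1 / c)) ^ (-c) = x⁻¹ := by
  rw [← Real.rpow_mul hx.le]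
  have : 1 / c * (-c) = -1 := by field_simp
  rw [this, Real.rpow_neg_one]

section Tsec
variable {κ γi γc ε : ℝ} {𝒯 : ℝ → ℝ}
variable (hκ : 0 < κ) (hγi : 1 < γi) (hγc : 1 < γc) (hε : 0 < ε)
variable (h𝒯 : ∀ p > (0:ℝ), 1 < 𝒯 p ∧ Pe κ γi γc ε (𝒯 p) = p)

include hκ hγi hγc hε h𝒯

lemma T_anti {p q : ℝ} (hp : 0 < p) (hpq : p < q) : 𝒯 q < 𝒯 p := by
  obtain ⟨h1p, h2p⟩ := h𝒯 p hp
  obtain ⟨h1q, h2q⟩ := h𝒯 q (hp.trans hpq)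
  by_contra hcon
  push_neg at hcon
  rcases eq_or_lt_of_le hcon with heq | hlt
  · rw [← h2p, ← h2q, heq] at hpq; exact lt_irrefl _ hpq
  · have := Pe_strictAntiOn (κ := κ) (γi := γi) (γc := γc) (ε := ε) hκ (by linarith) (by linarith) hε
      (a := 𝒯 p) (b := 𝒯 q) h1p h1q hlt
    rw [h2p, h2q] at this; linarith

lemma T_le {p q : ℝ} (hp : 0 < p) (hpq : p ≤ q) : 𝒯 q ≤ 𝒯 p := by
  rcases eq_or_lt_of_le hpq with rfl | h
  · exact le_rfl
  · exact (T_anti hκ hγi hγc hε h𝒯 hp h).le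

lemma T_lb {p : ℝ} (hp : 0 < p) : (κ / p) ^ (1 / γi) ≤ 𝒯 p := by
  obtain ⟨h1, h2⟩ := h𝒯 p hp
  have hτ0 : 0 < 𝒯 p := lt_trans one_pos h1
  have hterm : 0 ≤ ε * (𝒯 p - 1) ^ (-γc) := by
    have : 0 < (𝒯 p - 1) ^ (-γc) := Real.rpow_pos_of_pos (by linarith) _
    positivity
  have h2' : κ * (𝒯 p) ^ (-γi) + ε * (𝒯 p - 1) ^ (-γc) = p := h2
  have hκτ : κ * (𝒯 p) ^ (-γi) ≤ p := by linarith
  have hτγ : 0 < (𝒯 p) ^ γi := Real.rpow_pos_of_pos hτ0 _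
  rw [Real.rpow_neg hτ0.le, ← div_eq_mul_inv] at hκτ
  have hdiv : κ / p ≤ (𝒯 p) ^ γi := by
    rw [div_le_iff₀ hp]
    have := (div_le_iff₀ hτγ).1 hκτ
    nlinarith
  calc (κ / p) ^ (1 / γi) ≤ ((𝒯 p) ^ γi) ^ (1 / γi) :=
        Real.rpow_le_rpow (by positivity) hdiv (by positivity)
    _ = 𝒯 p := by
        rw [← Real.rpow_mul hτ0.le, mul_one_div, div_self (by linarith : γi ≠ 0),
          Real.rpow_one]

lemma T_ub {p M : ℝ} (hp : 0 < p) (hM1 : 1 + (2 * ε / p) ^ (1 / γc) ≤ M)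
    (hM2 : (2 * κ / p) ^ (1 / γi) ≤ M) : 𝒯 p ≤ M := by
  have hpow : 0 < (2 * ε / p) ^ (1 / γc) := Real.rpow_pos_of_pos (by positivity) _
  have hM : 1 < M := by linarith
  by_contra hcon
  push_neg at hcon
  obtain ⟨h1, h2⟩ := h𝒯 p hp
  have e1 : κ * M ^ (-γi) ≤ p / 2 := by
    have hb : (0:ℝ) < (2 * κ / p) ^ (1 / γi) := Real.rpow_pos_of_pos (by positivity) _
    have hmono : M ^ (-γi) ≤ ((2 * κ / p) ^ (1 / γi)) ^ (-γi) :=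
      Real.rpow_le_rpow_of_nonpos hb hM2 (by linarith)
    rw [rpow_inv_exp_neg (by positivity) (by linarith)] at hmono
    have : (2 * κ / p)⁻¹ = p / (2 * κ) := by rw [inv_div]
    rw [this] at hmono
    calc κ * M ^ (-γi) ≤ κ * (p / (2 * κ)) := mul_le_mul_of_nonneg_left hmono hκ.le
      _ = p / 2 := by field_simp
  have e2 : ε * (M - 1) ^ (-γc) ≤ p / 2 := by
    have hb : (0:ℝ) < (2 * ε / p) ^ (1 / γc) := Real.rpow_pos_of_pos (by positivity) _
    have hM1' : (2 * ε / p) ^ (1 / γc) ≤ M - 1 := by linarith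
    have hmono : (M - 1) ^ (-γc) ≤ ((2 * ε / p) ^ (1 / γc)) ^ (-γc) :=
      Real.rpow_le_rpow_of_nonpos hb hM1' (by linarith)
    rw [rpow_inv_exp_neg (by positivity) (by linarith)] at hmono
    have : (2 * ε / p)⁻¹ = p / (2 * ε) := by rw [inv_div]
    rw [this] at hmono
    calc ε * (M - 1) ^ (-γc) ≤ ε * (p / (2 * ε)) := mul_le_mul_of_nonneg_left hmono hε.le
      _ = p / 2 := by field_simp
  have ePe : Pe κ γi γc ε M ≤ p := by
    show κ * M ^ (-γi) + ε * (M - 1) ^ (-γc) ≤ p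
    linarith
  have := Pe_strictAntiOn (κ := κ) (γi := γi) (γc := γc) (ε := ε) hκ (by linarith) (by linarith) hε
    (a := M) (b := 𝒯 p) hM h1 hcon
  rw [h2] at this
  linarith

lemma T_cont {p : ℝ} (hp : 0 < p) : ContinuousAt 𝒯 p := by
  rw [Metric.continuousAt_iff]
  intro η hη
  obtain ⟨h1, h2⟩ := h𝒯 p hp
  set η' := min (η / 2) ((𝒯 p - 1) / 2) with hη'def
  have hη'0 : 0 < η' := lt_min (by linarith) (by linarith)
  have hη'le : η' ≤ (𝒯 p - 1) / 2 := min_le_right _ _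
  have hη'le2 : η' ≤ η / 2 := min_le_left _ _
  have hlo : 1 < 𝒯 p - η' := by linarith
  have hhi : 1 < 𝒯 p + η' := by linarith
  have ha : Pe κ γi γc ε (𝒯 p + η') < p := by
    have := Pe_strictAntiOn (κ := κ) (γi := γi) (γc := γc) (ε := ε) hκ (by linarith) (by linarith) hε
      (a := 𝒯 p) (b := 𝒯 p + η') h1 hhi (by linarith)
    rw [h2] at this; exact this
  have hb : p < Pe κ γi γc ε (𝒯 p - η') := by
    have := Pe_strictAntiOn (κ := κ) (γi := γi) (γc := γc) (ε := ε) hκ (by linarith) (by linarith) hε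
      (a := 𝒯 p - η') (b := 𝒯 p) hlo h1 (by linarith)
    rw [h2] at this; exact this
  refine ⟨min (p - Pe κ γi γc ε (𝒯 p + η')) (Pe κ γi γc ε (𝒯 p - η') - p),
    lt_min (by linarith) (by linarith), ?_⟩
  intro q hq
  rw [Real.dist_eq] at hq ⊢
  have habs := abs_lt.1 hq
  have hq1 : Pe κ γi γc ε (𝒯 p + η') < q := by
    have := min_le_left (p - Pe κ γi γc ε (𝒯 p + η')) (Pe κ γi γc ε (𝒯 p - η') - p)
    linarith
  have hq2 : q < Pe κ γi γc ε (𝒯 p - η') := by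
    have := min_le_right (p - Pe κ γi γc ε (𝒯 p + η')) (Pe κ γi γc ε (𝒯 p - η') - p)
    linarith
  have hq0 : 0 < q := lt_trans (Pe_pos hκ hε hhi) hq1
  obtain ⟨hq1', hq2'⟩ := h𝒯 q hq0
  have hlt1 : 𝒯 q < 𝒯 p + η' := by
    by_contra hc
    push_neg at hc
    have := Pe_anti_le (κ := κ) (γi := γi) (γc := γc) (ε := ε) hκ (by linarith) (by linarith) hε hhi hc
    rw [hq2'] at this; linarith
  have hlt2 : 𝒯 p - η' < 𝒯 q := by
    by_contra hc
    push_neg at hc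
    have := Pe_anti_le (κ := κ) (γi := γi) (γc := γc) (ε := ε) hκ (by linarith) (by linarith) hε hq1' hc
    rw [hq2'] at this
    linarith
  have : |𝒯 q - 𝒯 p| < η' := abs_lt.2 ⟨by linarith, by linarith⟩
  linarith

lemma T_hasDeriv {p : ℝ} (hp : 0 < p) :
    HasDerivAt 𝒯 (PeD κ γi γc ε (𝒯 p))⁻¹ p := by
  have h1 := (h𝒯 p hp).1
  apply HasDerivAt.of_local_left_inverse (T_cont hκ hγi hγc hε h𝒯 hp)
    (hasDerivAt_Pe h1) (PeD_neg hκ (by linarith) (by linarith) hε h1).ne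
  filter_upwards [eventually_gt_nhds hp] with y hy using (h𝒯 y hy).2
end Tsec


set_option linter.unusedSectionVars false

section Tsec2
variable {κ γi γc ε : ℝ} {𝒯 : ℝ → ℝ}
variable (hκ : 0 < κ) (hγi : 1 < γi) (hγc : 1 < γc) (hε : 0 < ε)
variable (h𝒯 : ∀ p > (0:ℝ), 1 < 𝒯 p ∧ Pe κ γi γc ε (𝒯 p) = p)

include hκ hγi hγc hε h𝒯

lemma T_lip {pmin B L p q : ℝ} (hpmin : 0 < pmin)
    (hB : ∀ x, pmin ≤ x → 𝒯 x ≤ B) (hL : L = B ^ (γi + 1) / (κ * γi))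
    (hp : pmin ≤ p) (hpq : p ≤ q) : 𝒯 p - 𝒯 q ≤ L * (q - p) := by
  rcases eq_or_lt_of_le hpq with rfl | hlt
  · simp
  have hp0 : 0 < p := lt_of_lt_of_le hpmin hp
  have hq0 : 0 < q := lt_trans hp0 hlt
  have ha1 : 1 < 𝒯 q := (h𝒯 q hq0).1
  have hab : 𝒯 q < 𝒯 p := T_anti hκ hγi hγc hε h𝒯 hp0 hlt
  have hbB : 𝒯 p ≤ B := hB p hp
  have hB1 : 1 < B := lt_of_lt_of_le (lt_trans ha1 hab) hbB
  have hB0 : (0:ℝ) < B := by linarith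
  have hL0 : 0 < L := by rw [hL]; positivity
  have hLinv : 1 / L = κ * γi * B ^ (-γi - 1) := by
    rw [hL, show -γi - 1 = -(γi + 1) by ring, Real.rpow_neg hB0.le]
    field_simp
  have hanti : AntitoneOn (fun τ => Pe κ γi γc ε τ + τ / L) (Icc (𝒯 q) (𝒯 p)) := by
    have hmem : ∀ τ ∈ Icc (𝒯 q) (𝒯 p), 1 < τ := fun τ hτ => lt_of_lt_of_le ha1 hτ.1
    apply antitoneOn_of_deriv_nonpos (convex_Icc _ _)
    · intro τ hτ
      exact (((hasDerivAt_Pe (κ := κ) (γi := γi) (γc := γc) (ε := ε)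
        (hmem τ hτ)).add ((hasDerivAt_id τ).div_const L)).continuousAt).continuousWithinAt
    · intro τ hτ
      rw [interior_Icc] at hτ
      exact (((hasDerivAt_Pe (κ := κ) (γi := γi) (γc := γc) (ε := ε)
        (hmem τ (Ioo_subset_Icc_self hτ))).add
        ((hasDerivAt_id τ).div_const L)).differentiableAt).differentiableWithinAt
    · intro τ hτ
      rw [interior_Icc] at hτ
      have h1τ : 1 < τ := hmem τ (Ioo_subset_Icc_self hτ)
      have hd : HasDerivAt (fun τ : ℝ => Pe κ γi γc ε τ + τ / L)
          (PeD κ γi γc ε τ + 1 / L) τ := by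
        simpa [Pi.add_def] using (hasDerivAt_Pe (κ := κ) (γi := γi) (γc := γc) (ε := ε) h1τ).add
          ((hasDerivAt_id τ).div_const L)
      rw [hd.deriv]
      have t2 : B ^ (-γi - 1) ≤ τ ^ (-γi - 1) := by
        apply Real.rpow_le_rpow_of_nonpos (by linarith) (le_trans hτ.2.le hbB) (by linarith)
      have t1 : 0 < ε * (γc * (τ - 1) ^ (-γc - 1)) := by
        have : 0 < (τ - 1) ^ (-γc - 1) := Real.rpow_pos_of_pos (by linarith) _
        positivity
      have hκγ : 0 < κ * γi := by positivity
      have := mul_le_mul_of_nonneg_left t2 hκγ.le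
      simp only [PeD]
      rw [hLinv] at *
      nlinarith
  have happ := hanti (a := 𝒯 q) (b := 𝒯 p) ⟨le_rfl, hab.le⟩ ⟨hab.le, le_rfl⟩ hab.le
  simp only at happ
  rw [(h𝒯 p hp0).2, (h𝒯 q hq0).2] at happ
  -- p + 𝒯 p / L ≤ q + 𝒯 q / L
  have : (𝒯 p - 𝒯 q) / L ≤ q - p := by
    rw [div_le_iff₀ hL0, sub_mul]
    have e1 : 𝒯 p / L * L = 𝒯 p := div_mul_cancel₀ _ hL0.ne'
    have e2 : 𝒯 q / L * L = 𝒯 q := div_mul_cancel₀ _ hL0.ne'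
    nlinarith [mul_le_mul_of_nonneg_right happ hL0.le]
  calc 𝒯 p - 𝒯 q = (𝒯 p - 𝒯 q) / L * L := (div_mul_cancel₀ _ hL0.ne').symm
    _ ≤ (q - p) * L := mul_le_mul_of_nonneg_right this hL0.le
    _ = L * (q - p) := mul_comm _ _

lemma T_kb {m : ℝ} (hm : 0 < m)
    (hε' : ε < κ * (1 - (1 + m) ^ (-γi)) * m ^ γc) : 𝒯 κ ≤ 1 + m := by
  by_contra hc
  push_neg at hc
  obtain ⟨h1, h2⟩ := h𝒯 κ hκ
  set t := 𝒯 κ - 1 with ht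
  have htm : m < t := by simp only [ht]; linarith
  have ht0 : 0 < t := lt_trans hm htm
  have e : 𝒯 κ = t + 1 := by simp only [ht]; ring
  have h2' : κ * (t + 1) ^ (-γi) + ε * t ^ (-γc) = κ := by
    have : Pe κ γi γc ε (𝒯 κ) = κ * (t + 1) ^ (-γi) + ε * (t + 1 - 1) ^ (-γc) := by
      rw [← e]; rfl
    rw [h2] at this
    simpa using this.symm
  have htc : t ^ (-γc) * t ^ γc = 1 := by
    rw [← Real.rpow_add ht0]; simp
  have h3 : ε * t ^ (-γc) = κ - κ * (t + 1) ^ (-γi) := by linarith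
  have hεt : ε = κ * (1 - (t + 1) ^ (-γi)) * t ^ γc := by
    calc ε = ε * (t ^ (-γc) * t ^ γc) := by rw [htc]; ring
      _ = (κ - κ * (t + 1) ^ (-γi)) * t ^ γc := by rw [← mul_assoc, h3]
      _ = κ * (1 - (t + 1) ^ (-γi)) * t ^ γc := by ring
  have c1 : (t + 1) ^ (-γi) ≤ (1 + m) ^ (-γi) :=
    Real.rpow_le_rpow_of_nonpos (by linarith) (by linarith) (by linarith)
  have c2 : m ^ γc ≤ t ^ γc := Real.rpow_le_rpow hm.le htm.le (by linarith)
  have c3 : (1 + m) ^ (-γi) < 1 :=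
    Real.rpow_lt_one_of_one_lt_of_neg (by linarith) (by linarith)
  have c4 : 0 < m ^ γc := Real.rpow_pos_of_pos hm _
  have c5 : 0 < t ^ γc := Real.rpow_pos_of_pos ht0 _
  have s1 : κ * (1 - (1 + m) ^ (-γi)) * t ^ γc ≤ κ * (1 - (t + 1) ^ (-γi)) * t ^ γc := by
    nlinarith
  have s2 : κ * (1 - (1 + m) ^ (-γi)) * m ^ γc ≤ κ * (1 - (1 + m) ^ (-γi)) * t ^ γc := by
    have hpos : 0 ≤ κ * (1 - (1 + m) ^ (-γi)) := by nlinarith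
    exact mul_le_mul_of_nonneg_left c2 hpos
  linarith

lemma T_sqrt_deriv_cont {x : ℝ} (hx : 0 < x) :
    ContinuousAt (fun ξ => Real.sqrt (-deriv 𝒯 ξ)) x := by
  have hD : ContinuousAt (fun ξ => (PeD κ γi γc ε (𝒯 ξ))⁻¹) x := by
    have h1x : 1 < 𝒯 x := (h𝒯 x hx).1
    have hTc : ContinuousAt 𝒯 x := T_cont hκ hγi hγc hε h𝒯 hx
    have hPeD : ContinuousAt (PeD κ γi γc ε) (𝒯 x) := by
      have c1 : ContinuousAt (fun τ : ℝ => τ ^ (-γi - 1)) (𝒯 x) :=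
        Real.continuousAt_rpow_const _ _ (Or.inl (by linarith))
      have c2 : ContinuousAt (fun τ : ℝ => (τ - 1) ^ (-γc - 1)) (𝒯 x) := by
        have : ContinuousAt (fun τ : ℝ => τ ^ (-γc - 1)) (𝒯 x - 1) :=
          Real.continuousAt_rpow_const _ _ (Or.inl (by linarith))
        have hsub : ContinuousAt (fun τ : ℝ => τ - 1) (𝒯 x) :=
          continuousAt_id.sub continuousAt_const
        exact ContinuousAt.comp (f := fun τ : ℝ => τ - 1) (x := 𝒯 x) this hsub
      exact ((continuousAt_const.mul (c1.const_mul _)).add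
        (continuousAt_const.mul (c2.const_mul _)))
    have hne : PeD κ γi γc ε (𝒯 x) ≠ 0 :=
      (PeD_neg hκ (by linarith) (by linarith) hε h1x).ne
    exact ((hPeD.comp hTc).inv₀ hne)
  have heq : (fun ξ => deriv 𝒯 ξ) =ᶠ[nhds x] (fun ξ => (PeD κ γi γc ε (𝒯 ξ))⁻¹) := by
    filter_upwards [eventually_gt_nhds hx] with y hy
    exact (T_hasDeriv hκ hγi hγc hε h𝒯 hy).deriv
  have : ContinuousAt (fun ξ => deriv 𝒯 ξ) x := hD.congr heq.symm
  exact Real.continuous_sqrt.continuousAt.comp this.neg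
end Tsec2


/-- Forward wave map of the first family (1-shock for `σ ≥ 0`, 1-rarefaction for `σ < 0`)
for the p-system with specific-volume law `Tf`, in the variables `(p,u)`. -/
noncomputable def Phi1 (Tf : ℝ → ℝ) (σ : ℝ) (U : ℝ × ℝ) : ℝ × ℝ :=
  if 0 ≤ σ then (U.1 + σ, U.2 - Real.sqrt ((Tf U.1 - Tf (U.1 + σ)) * σ))
  else (U.1 + σ, U.2 - ∫ ξ in U.1..(U.1 + σ), Real.sqrt (-deriv Tf ξ))

/-- Forward wave map of the second family (2-shock for `σ < 0`, 2-rarefaction for `σ > 0`)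
for the p-system with specific-volume law `Tf`, in the variables `(p,u)`. -/
noncomputable def Phi2 (Tf : ℝ → ℝ) (σ : ℝ) (U : ℝ × ℝ) : ℝ × ℝ :=
  if σ < 0 then (U.1 + σ, U.2 - Real.sqrt ((Tf (U.1 + σ) - Tf U.1) * (-σ)))
  else (U.1 + σ, U.2 + ∫ ξ in U.1..(U.1 + σ), Real.sqrt (-deriv Tf ξ))



lemma Phi1_fst (Tf : ℝ → ℝ) (σ : ℝ) (U : ℝ × ℝ) : (Phi1 Tf σ U).1 = U.1 + σ := by
  unfold Phi1; split <;> rfl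

lemma Phi2_fst (Tf : ℝ → ℝ) (σ : ℝ) (U : ℝ × ℝ) : (Phi2 Tf σ U).1 = U.1 + σ := by
  unfold Phi2; split <;> rfl

set_option maxHeartbeats 4000000 in
lemma main_key (𝒯 : ℝ → ℝ) (κ p01 u01 r0 u02e pmin dκ m B L K C δ : ℝ)
    (hκ : 0 < κ) (hdκ : 0 < dκ) (hm : 0 < m) (hB1 : 1 ≤ B) (hL : 0 ≤ L)
    (hpmin : 0 < pmin)
    (hT1 : ∀ p, 0 < p → 1 < 𝒯 p)
    (hanti : ∀ p q, 0 < p → p < q → 𝒯 q < 𝒯 p)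
    (hcont : ∀ p : ℝ, 0 < p → ContinuousAt 𝒯 p)
    (hdc : ∀ p : ℝ, 0 < p → ContinuousAt (fun ξ => Real.sqrt (-deriv 𝒯 ξ)) p)
    (hB : ∀ p, pmin ≤ p → 𝒯 p ≤ B)
    (hLip : ∀ p q, pmin ≤ p → p ≤ q → 𝒯 p - 𝒯 q ≤ L * (q - p))
    (hlow : ∀ p, pmin ≤ p → p ≤ κ - 2 * dκ → 1 + 2 * m ≤ 𝒯 p)
    (hTκ : 𝒯 κ ≤ 1 + m)
    (hu02 : u02e = u01 - Real.sqrt ((𝒯 r0 - 𝒯 p01) * (p01 - r0)))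
    (hr0a : pmin ≤ r0 - δ) (hr0b : r0 + δ ≤ κ - 2 * dκ)
    (hδ : 0 < δ) (hC1 : 1 ≤ C)
    (hPK : κ < p01 - (C + 1) * δ)
    (hCδ2 : (C + 1) * δ ≤ 2)
    (hK : K = 2 * L * (p01 + 2) + 2 * B)
    (hCbig : (2 + K / (2 * Real.sqrt (m * (2 * dκ)))) * (2 * Real.sqrt (B * (p01 + 2)))
      < C * m)
    (Ul Ur : ℝ × ℝ)
    (hUl1 : |Ul.1 - p01| < δ) (hUl2 : |Ul.2 - u01| < δ)
    (hUr1 : |Ur.1 - r0| < δ) (hUr2 : |Ur.2 - u02e| < δ) :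
    ∃! σ : ℝ × ℝ, |σ.1| ≤ C * δ ∧ σ.2 < 0 ∧
      Ur = Phi2 𝒯 σ.2 (Phi1 𝒯 σ.1 Ul) ∧ κ < (Phi1 𝒯 σ.1 Ul).1 := by
  obtain ⟨p, u⟩ := Ul
  obtain ⟨r, v⟩ := Ur
  simp only at hUl1 hUl2 hUr1 hUr2
  have hCδpos : 0 < C * δ := by positivity
  have hUl1' := abs_lt.1 hUl1
  have hUl2' := abs_lt.1 hUl2
  have hUr1' := abs_lt.1 hUr1
  have hUr2' := abs_lt.1 hUr2
  have hCd : (C + 1) * δ = C * δ + δ := by ring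
  have hCδδ : δ ≤ C * δ := le_mul_of_one_le_left hδ.le hC1
  have hpCδ : κ < p - C * δ := by linarith
  have hp0 : 0 < p := by linarith
  have hrκ : r < κ - 2 * dκ := by linarith
  have hrpmin : pmin ≤ r := by linarith
  have hr0' : pmin ≤ r0 := by linarith
  have hr0'' : r0 ≤ κ - 2 * dκ := by linarith
  have hr0pos : 0 < r := lt_of_lt_of_le hpmin hrpmin
  have hκp01 : κ < p01 := by linarith
  have hp01pos : 0 < p01 := lt_trans hκ hκp01
  have hδ1 : δ ≤ 1 := by linarith
  have hup : p + C * δ ≤ p01 + 2 := by linarith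
  have hpminκ : pmin < κ := by linarith
  -- weak antitonicity of 𝒯
  have hanti' : ∀ a b, 0 < a → a ≤ b → 𝒯 b ≤ 𝒯 a := by
    intro a b ha hab
    rcases eq_or_lt_of_le hab with rfl | h
    · exact le_rfl
    · exact (hanti a b ha h).le
  -- G s q = (𝒯 s - 𝒯 q)(q - s)
  obtain ⟨G, hGdef⟩ : ∃ G : ℝ → ℝ → ℝ, G = fun s q => (𝒯 s - 𝒯 q) * (q - s) := ⟨_, rfl⟩
  have hrange : ∀ s, pmin ≤ s → s ≤ κ - 2 * dκ → ∀ q, κ ≤ q →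
      m ≤ 𝒯 s - 𝒯 q ∧ 2 * dκ ≤ q - s ∧ m * (2 * dκ) ≤ G s q := by
    intro s hs1 hs2 q hq
    have hs0 : 0 < s := lt_of_lt_of_le hpmin hs1
    have h1 : 1 + 2 * m ≤ 𝒯 s := hlow s hs1 hs2
    have h2 : 𝒯 q ≤ 𝒯 κ := hanti' κ q hκ hq
    have h3 : m ≤ 𝒯 s - 𝒯 q := by linarith
    have h4 : 2 * dκ ≤ q - s := by linarith
    refine ⟨h3, h4, ?_⟩
    rw [hGdef]
    exact mul_le_mul h3 h4 (by positivity) (by linarith)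
  have hGub : ∀ s q, pmin ≤ s → s ≤ κ - 2 * dκ → κ ≤ q → q ≤ p01 + 2 →
      G s q ≤ B * (p01 + 2) := by
    intro s q hs1 hs2 hq1 hq2
    have hs0 : 0 < s := lt_of_lt_of_le hpmin hs1
    have hq0 : 0 < q := lt_of_lt_of_le hκ hq1
    have h1 : 𝒯 s ≤ B := hB s hs1
    have h2 : 1 < 𝒯 q := hT1 q hq0
    have h3 := (hrange s hs1 hs2 q hq1).1
    have h4 := (hrange s hs1 hs2 q hq1).2.1
    rw [hGdef]
    exact mul_le_mul (by linarith) (by linarith) (by linarith) (by linarith)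
  have hGmono : ∀ q q', κ ≤ q → q < q' → G r q < G r q' := by
    intro q q' hq hqq'
    have hq0 : 0 < q := lt_of_lt_of_le hκ hq
    have h1 := (hrange r hrpmin hrκ.le q hq).1
    have h2 := (hrange r hrpmin hrκ.le q hq).2.1
    have h3 : 𝒯 q' < 𝒯 q := hanti q q' hq0 hqq'
    have e1 : 𝒯 r - 𝒯 q < 𝒯 r - 𝒯 q' := by linarith
    have e2 : q - r < q' - r := by linarith
    rw [hGdef]
    exact mul_lt_mul'' e1 e2 (by linarith) (by linarith)
  -- A and h
  obtain ⟨A, hAdef⟩ : ∃ A : ℝ → ℝ, A = fun σ => (Phi1 𝒯 σ (p, u)).2 := ⟨_, rfl⟩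
  obtain ⟨h, hhdef⟩ : ∃ h : ℝ → ℝ, h = fun σ => A σ - Real.sqrt (G r (p + σ)) := ⟨_, rfl⟩
  obtain ⟨f, hfdef⟩ : ∃ f : ℝ → ℝ, f = fun ξ => Real.sqrt (-deriv 𝒯 ξ) := ⟨_, rfl⟩
  have hAs : ∀ σ : ℝ, 0 ≤ σ → A σ = u - Real.sqrt ((𝒯 p - 𝒯 (p + σ)) * σ) := by
    intro σ hσ; simp only [hAdef, Phi1, if_pos hσ]
  have hAr : ∀ σ : ℝ, σ < 0 →
      A σ = u - ∫ ξ in p..(p + σ), f ξ := by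
    intro σ hσ; rw [hfdef]; simp only [hAdef, Phi1, if_neg (not_le.2 hσ)]
  have hA0 : A 0 = u := by
    rw [hAs 0 le_rfl]; simp
  have hf0 : ∀ ξ, 0 ≤ f ξ := fun ξ => by rw [hfdef]; exact Real.sqrt_nonneg _
  have hfc : ContinuousOn f (Ici κ) := by
    rw [hfdef]
    exact fun x hx => (hdc x (lt_of_lt_of_le hκ hx)).continuousWithinAt
  have hint : ∀ a b, κ ≤ a → κ ≤ b → IntervalIntegrable f volume a b := by
    intro a b ha hb
    apply (hfc.mono _).intervalIntegrable
    intro x hx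
    exact le_trans (le_min ha hb) hx.1
  -- A antitone
  have hAmono : ∀ σ σ', -(C * δ) ≤ σ → σ ≤ σ' → A σ' ≤ A σ := by
    intro σ σ' hσl hσσ'
    have hpσ : κ ≤ p + σ := by linarith
    rcases le_or_gt 0 σ with h0σ | h0σ
    · rw [hAs σ h0σ, hAs σ' (le_trans h0σ hσσ')]
      have hmm : (𝒯 p - 𝒯 (p + σ)) * σ ≤ (𝒯 p - 𝒯 (p + σ')) * σ' := by
        apply mul_le_mul _ hσσ' h0σ _
        · have := hanti' (p + σ) (p + σ') (by linarith) (by linarith)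
          linarith
        · have := hanti' p (p + σ') hp0 (by linarith)
          linarith
      have := Real.sqrt_le_sqrt hmm
      linarith
    rcases lt_or_ge σ' 0 with h0σ' | h0σ'
    · rw [hAr σ h0σ, hAr σ' h0σ']
      have key : (∫ ξ in p..(p + σ'), f ξ) - (∫ ξ in p..(p + σ), f ξ)
          = ∫ ξ in (p + σ)..(p + σ'), f ξ :=
        intervalIntegral.integral_interval_sub_left
          (hint p (p + σ') (by linarith) (by linarith))
          (hint p (p + σ) (by linarith) hpσ)
      have pos : 0 ≤ ∫ ξ in (p + σ)..(p + σ'), f ξ :=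
        intervalIntegral.integral_nonneg (by linarith) (fun x _ => hf0 x)
      linarith
    · have h1 : A σ' ≤ u := by
        rw [hAs σ' h0σ']
        have := Real.sqrt_nonneg ((𝒯 p - 𝒯 (p + σ')) * σ')
        linarith
      have h2 : u ≤ A σ := by
        rw [hAr σ h0σ]
        have e : (∫ ξ in p..(p + σ), f ξ) = -(∫ ξ in (p + σ)..p, f ξ) :=
          intervalIntegral.integral_symm _ _
        have pos : 0 ≤ ∫ ξ in (p + σ)..p, f ξ :=
          intervalIntegral.integral_nonneg (by linarith) (fun x _ => hf0 x)
        rw [e]; linarith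
      linarith
  -- h strict anti
  have hhanti : ∀ σ σ', -(C * δ) ≤ σ → σ < σ' → h σ' < h σ := by
    intro σ σ' hσl hlt
    have hAle : A σ' ≤ A σ := hAmono _ _ hσl hlt.le
    have hq : κ ≤ p + σ := by linarith
    have hGlt : G r (p + σ) < G r (p + σ') := hGmono _ _ hq (by linarith)
    have hGpos : 0 ≤ G r (p + σ) := by
      have := (hrange r hrpmin hrκ.le (p + σ) hq).2.2
      nlinarith
    have hs : Real.sqrt (G r (p + σ)) < Real.sqrt (G r (p + σ')) :=
      Real.sqrt_lt_sqrt hGpos hGlt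
    simp only [hhdef]
    linarith
  -- two-sided Lipschitz bound
  have hTnear : ∀ x y, pmin ≤ x → pmin ≤ y → |𝒯 x - 𝒯 y| ≤ L * |x - y| := by
    intro x y hx hy
    rcases le_total x y with hxy | hxy
    · have h1 := hLip x y hx hxy
      have h2 : 𝒯 y ≤ 𝒯 x := hanti' x y (lt_of_lt_of_le hpmin hx) hxy
      have e1 : |𝒯 x - 𝒯 y| = 𝒯 x - 𝒯 y := abs_of_nonneg (by linarith)
      have e2 : |x - y| = -(x - y) := abs_of_nonpos (by linarith)
      rw [e1, e2]
      linarith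
    · have h1 := hLip y x hy hxy
      have h2 : 𝒯 x ≤ 𝒯 y := hanti' y x (lt_of_lt_of_le hpmin hy) hxy
      have e1 : |𝒯 x - 𝒯 y| = -(𝒯 x - 𝒯 y) := abs_of_nonpos (by linarith)
      have e2 : |x - y| = x - y := abs_of_nonneg (by linarith)
      rw [e1, e2]
      linarith
  -- |G r p - G r0 p01| ≤ K δ
  have hGp : |G r p - G r0 p01| ≤ K * δ := by
    have ha1 : |𝒯 r - 𝒯 r0| ≤ L * |r - r0| := hTnear r r0 hrpmin hr0'
    have ha2 : |𝒯 p - 𝒯 p01| ≤ L * |p - p01| := hTnear p p01 (by linarith) (by linarith)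
    have haa : |(𝒯 r - 𝒯 p) - (𝒯 r0 - 𝒯 p01)| ≤ 2 * L * δ := by
      have : (𝒯 r - 𝒯 p) - (𝒯 r0 - 𝒯 p01) = (𝒯 r - 𝒯 r0) - (𝒯 p - 𝒯 p01) := by ring
      rw [this]
      have t1 : L * |r - r0| ≤ L * δ := mul_le_mul_of_nonneg_left hUr1.le hL
      have t2 : L * |p - p01| ≤ L * δ := mul_le_mul_of_nonneg_left hUl1.le hL
      calc |(𝒯 r - 𝒯 r0) - (𝒯 p - 𝒯 p01)| ≤ |𝒯 r - 𝒯 r0| + |𝒯 p - 𝒯 p01| :=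
            abs_sub _ _
        _ ≤ 2 * L * δ := by linarith
    have hbb : |(p - r) - (p01 - r0)| ≤ 2 * δ := by
      have : (p - r) - (p01 - r0) = (p - p01) - (r - r0) := by ring
      rw [this]
      calc |(p - p01) - (r - r0)| ≤ |p - p01| + |r - r0| := abs_sub _ _
        _ ≤ 2 * δ := by linarith
    have ha0m := (hrange r0 hr0' hr0'' p01 hκp01.le).1
    have ha0B : 𝒯 r0 - 𝒯 p01 ≤ B := by
      have := hB r0 hr0'
      have := hT1 p01 hp01pos
      linarith
    have hb' : 0 ≤ p - r := by linarith
    have hbub : p - r ≤ p01 + 2 := by linarith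
    have key : G r p - G r0 p01 =
        ((𝒯 r - 𝒯 p) - (𝒯 r0 - 𝒯 p01)) * (p - r) + (𝒯 r0 - 𝒯 p01) * ((p - r) - (p01 - r0)) := by
      simp only [hGdef]; ring
    rw [key, hK]
    calc |((𝒯 r - 𝒯 p) - (𝒯 r0 - 𝒯 p01)) * (p - r) + (𝒯 r0 - 𝒯 p01) * ((p - r) - (p01 - r0))|
        ≤ |((𝒯 r - 𝒯 p) - (𝒯 r0 - 𝒯 p01)) * (p - r)| + |(𝒯 r0 - 𝒯 p01) * ((p - r) - (p01 - r0))| :=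
          abs_add_le _ _
      _ = |(𝒯 r - 𝒯 p) - (𝒯 r0 - 𝒯 p01)| * |p - r| + |𝒯 r0 - 𝒯 p01| * |(p - r) - (p01 - r0)| := by
          rw [abs_mul, abs_mul]
      _ ≤ (2 * L * δ) * (p01 + 2) + B * (2 * δ) := by
          have e1 : |p - r| = p - r := abs_of_nonneg hb'
          have e2 : |𝒯 r0 - 𝒯 p01| = 𝒯 r0 - 𝒯 p01 := abs_of_nonneg (by linarith)
          rw [e1, e2]
          have t1 : |(𝒯 r - 𝒯 p) - (𝒯 r0 - 𝒯 p01)| * (p - r) ≤ (2 * L * δ) * (p01 + 2) :=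
            mul_le_mul haa hbub hb' (by positivity)
          have t2 : (𝒯 r0 - 𝒯 p01) * |(p - r) - (p01 - r0)| ≤ B * (2 * δ) :=
            mul_le_mul ha0B hbb (abs_nonneg _) (by linarith)
          linarith
      _ = (2 * L * (p01 + 2) + 2 * B) * δ := by ring
  set gmin := m * (2 * dκ) with hgmindef
  set gmax := B * (p01 + 2) with hgmaxdef
  set S := Real.sqrt gmax with hSdef
  set K' := K / (2 * Real.sqrt gmin) with hK'def
  have hgmin0 : 0 < gmin := by positivity
  have hgmax0 : 0 < gmax := by positivity
  have hS0 : 0 < S := Real.sqrt_pos.2 hgmax0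
  have hGrp : gmin ≤ G r p := (hrange r hrpmin hrκ.le p (by linarith)).2.2
  have hGr0 : gmin ≤ G r0 p01 := (hrange r0 hr0' hr0'' p01 hκp01.le).2.2
  have hK0 : 0 ≤ K := by rw [hK]; positivity
  have hK'0 : 0 ≤ K' := by rw [hK'def]; positivity
  have hsqgmin : 0 < Real.sqrt gmin := Real.sqrt_pos.2 hgmin0
  have hsq : |Real.sqrt (G r p) - Real.sqrt (G r0 p01)| ≤ K' * δ := by
    have h1 := sqrt_diff_le hgmin0 hGrp hGr0
    have h2 : |G r p - G r0 p01| / (2 * Real.sqrt gmin) ≤ K * δ / (2 * Real.sqrt gmin) :=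
      (div_le_div_iff_of_pos_right (by positivity)).2 hGp
    have h3 : K * δ / (2 * Real.sqrt gmin) = K' * δ := by rw [hK'def]; ring
    linarith
  -- |h 0 - v| ≤ (2 + K') δ
  have hh0v : |h 0 - v| ≤ (2 + K') * δ := by
    have e : h 0 - v = (u - u01) + (Real.sqrt (G r0 p01) - Real.sqrt (G r p))
        + (u02e - v) := by
      simp only [hhdef]
      rw [hA0, add_zero, hu02]
      have : Real.sqrt ((𝒯 r0 - 𝒯 p01) * (p01 - r0)) = Real.sqrt (G r0 p01) := by
        rw [hGdef]
      rw [this]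
      ring
    rw [e]
    have t1 : |(u - u01) + (Real.sqrt (G r0 p01) - Real.sqrt (G r p)) + (u02e - v)|
        ≤ |u - u01| + |Real.sqrt (G r0 p01) - Real.sqrt (G r p)| + |u02e - v| := by
      calc |(u - u01) + (Real.sqrt (G r0 p01) - Real.sqrt (G r p)) + (u02e - v)|
          ≤ |(u - u01) + (Real.sqrt (G r0 p01) - Real.sqrt (G r p))| + |u02e - v| := abs_add_le _ _
        _ ≤ |u - u01| + |Real.sqrt (G r0 p01) - Real.sqrt (G r p)| + |u02e - v| := by
            have := abs_add_le (u - u01) (Real.sqrt (G r0 p01) - Real.sqrt (G r p))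
            linarith
    have t2 : |Real.sqrt (G r0 p01) - Real.sqrt (G r p)| ≤ K' * δ := by
      rw [abs_sub_comm]; exact hsq
    have t3 : |u02e - v| ≤ δ := by rw [abs_sub_comm]; exact hUr2.le
    have : (2 + K') * δ = δ + K' * δ + δ := by ring
    linarith
  -- decrease/increase estimate
  have hdec : ∀ a, 0 ≤ a → a ≤ C * δ → h a ≤ h 0 - m * a / (2 * S) := by
    intro a ha haC
    have hq1 : κ ≤ p + a := by linarith
    have hq2 : p + a ≤ p01 + 2 := by linarith
    have hgap : G r p + m * a ≤ G r (p + a) := by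
      have e : G r (p + a) - G r p = (𝒯 r - 𝒯 (p + a)) * a + (𝒯 p - 𝒯 (p + a)) * (p - r) := by
        simp only [hGdef]; ring
      have t1 : m ≤ 𝒯 r - 𝒯 (p + a) := (hrange r hrpmin hrκ.le (p + a) hq1).1
      have t2 : 0 ≤ 𝒯 p - 𝒯 (p + a) := by
        have := hanti' p (p + a) hp0 (by linarith); linarith
      have t3 : 0 ≤ p - r := by linarith
      have k1 : m * a ≤ (𝒯 r - 𝒯 (p + a)) * a := mul_le_mul_of_nonneg_right t1 ha
      have k2 : 0 ≤ (𝒯 p - 𝒯 (p + a)) * (p - r) := mul_nonneg t2 t3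
      linarith
    have hGpa : gmin ≤ G r (p + a) := (hrange r hrpmin hrκ.le (p + a) hq1).2.2
    have hGpaub : G r (p + a) ≤ gmax := hGub r (p + a) hrpmin hrκ.le hq1 hq2
    have hsqrt : m * a / (2 * S) ≤ Real.sqrt (G r (p + a)) - Real.sqrt (G r p) := by
      rw [hSdef]
      exact sqrt_sub_ge (by linarith) (by linarith) (by positivity) (by linarith) hGpaub
    have hAa : A a ≤ u := by
      rw [hAs a ha]
      have := Real.sqrt_nonneg ((𝒯 p - 𝒯 (p + a)) * a)
      linarith
    have hval0 : h 0 = u - Real.sqrt (G r p) := by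
      simp only [hhdef]; rw [hA0, add_zero]
    have hvala : h a = A a - Real.sqrt (G r (p + a)) := by rw [hhdef]
    rw [hval0, hvala]
    linarith
  have hinc : ∀ a, 0 ≤ a → a ≤ C * δ → h 0 + m * a / (2 * S) ≤ h (-a) := by
    intro a ha haC
    have hq0 : κ ≤ p - a := by linarith
    have hgap : G r (p - a) + m * a ≤ G r p := by
      have e : G r p - G r (p - a) = (𝒯 r - 𝒯 p) * a + (𝒯 (p - a) - 𝒯 p) * ((p - a) - r) := by
        simp only [hGdef]; ring
      have t1 : m ≤ 𝒯 r - 𝒯 p := (hrange r hrpmin hrκ.le p (by linarith)).1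
      have t2 : 0 ≤ 𝒯 (p - a) - 𝒯 p := by
        have := hanti' (p - a) p (by linarith) (by linarith); linarith
      have t3 : 0 ≤ (p - a) - r := by linarith
      have k1 : m * a ≤ (𝒯 r - 𝒯 p) * a := mul_le_mul_of_nonneg_right t1 ha
      have k2 : 0 ≤ (𝒯 (p - a) - 𝒯 p) * ((p - a) - r) := mul_nonneg t2 t3
      linarith
    have hGpa : gmin ≤ G r (p - a) := (hrange r hrpmin hrκ.le (p - a) hq0).2.2
    have hGpub : G r p ≤ gmax := hGub r p hrpmin hrκ.le (by linarith) (by linarith)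
    have hsqrt : m * a / (2 * S) ≤ Real.sqrt (G r p) - Real.sqrt (G r (p - a)) := by
      rw [hSdef]
      exact sqrt_sub_ge (by linarith) (by linarith) (by positivity) (by linarith) hGpub
    have hAa : u ≤ A (-a) := by
      have := hAmono (-a) 0 (by linarith) (by linarith)
      rw [hA0] at this; linarith
    have hval0 : h 0 = u - Real.sqrt (G r p) := by
      simp only [hhdef]; rw [hA0, add_zero]
    have hvala : h (-a) = A (-a) - Real.sqrt (G r (p + -a)) := by rw [hhdef]
    have e : p + -a = p - a := by ring
    rw [hval0, hvala, e]
    linarith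
  -- continuity pieces
  have hTci : ContinuousOn 𝒯 (Ici κ) :=
    fun x hx => (hcont x (lt_of_lt_of_le hκ hx)).continuousWithinAt
  have hcGm : ContinuousOn (fun σ => Real.sqrt (G r (p + σ))) (Icc (-(C * δ)) (C * δ)) := by
    rw [hGdef]
    apply Real.continuous_sqrt.comp_continuousOn
    apply ContinuousOn.mul
    · apply continuousOn_const.sub
      apply hTci.comp (Continuous.continuousOn (continuous_const.add continuous_id))
      intro σ hσ
      have : -(C * δ) ≤ σ := hσ.1
      simp only [mem_Ici, id_eq, Pi.add_apply]
      linarith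
    · exact Continuous.continuousOn ((continuous_const.add continuous_id).sub continuous_const)
  have hcont1 : ContinuousOn h (Icc 0 (C * δ)) := by
    have hcrhs : ContinuousOn
        (fun σ => u - Real.sqrt ((𝒯 p - 𝒯 (p + σ)) * σ) - Real.sqrt (G r (p + σ)))
        (Icc 0 (C * δ)) := by
      apply ContinuousOn.sub
      · apply ContinuousOn.sub continuousOn_const
        apply Real.continuous_sqrt.comp_continuousOn
        apply ContinuousOn.mul
        · apply continuousOn_const.sub
          apply hTci.comp (Continuous.continuousOn (continuous_const.add continuous_id))
          intro σ hσ
          have : (0:ℝ) ≤ σ := hσ.1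
          simp only [mem_Ici, id_eq, Pi.add_apply]
          linarith
        · exact continuousOn_id
      · exact hcGm.mono (Icc_subset_Icc (by linarith) le_rfl)
    apply hcrhs.congr
    intro σ hσ
    rw [hhdef]
    show A σ - Real.sqrt (G r (p + σ)) = _
    rw [hAs σ hσ.1]
  have hcont2 : ContinuousOn h (Icc (-(C * δ)) 0) := by
    obtain ⟨fhat, hfhat⟩ : ∃ g : ℝ → ℝ, g = fun ξ => f (max ξ κ) := ⟨_, rfl⟩
    have hfhatc : Continuous fhat := by
      rw [hfhat, hfdef]
      have h1 : ContinuousOn (fun ξ => Real.sqrt (-deriv 𝒯 ξ)) (Ioi 0) :=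
        fun x hx => (hdc x hx).continuousWithinAt
      exact h1.comp_continuous (continuous_id.max continuous_const)
        (fun x => lt_of_lt_of_le hκ (le_max_right x κ))
    have hfhat_eq : ∀ ξ, κ ≤ ξ → fhat ξ = f ξ := by
      intro ξ hξ
      rw [hfhat]
      simp only [max_eq_left hξ]
    have hIeq : ∀ σ ∈ Icc (-(C * δ)) (0:ℝ),
        (∫ ξ in p..(p + σ), f ξ) = ∫ ξ in p..(p + σ), fhat ξ := by
      intro σ hσ
      apply intervalIntegral.integral_congr
      intro ξ hξ
      have hmin : κ ≤ min p (p + σ) := le_min (by linarith) (by linarith [hσ.1])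
      exact (hfhat_eq ξ (le_trans hmin hξ.1)).symm
    have hprim : Continuous (fun t => ∫ ξ in p..t, fhat ξ) :=
      intervalIntegral.continuous_primitive (fun a b => hfhatc.intervalIntegrable a b) p
    have hrhs : ContinuousOn
        (fun σ => u - (∫ ξ in p..(p + σ), fhat ξ) - Real.sqrt (G r (p + σ)))
        (Icc (-(C * δ)) 0) := by
      apply ContinuousOn.sub
      · apply ContinuousOn.sub continuousOn_const
        exact (hprim.comp (continuous_const.add continuous_id)).continuousOn
      · exact hcGm.mono (Icc_subset_Icc le_rfl (by linarith))
    apply hrhs.congr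
    intro σ hσ
    rcases eq_or_lt_of_le hσ.2 with heq | hlt
    · subst heq
      show h 0 = u - (∫ ξ in p..(p + 0), fhat ξ) - Real.sqrt (G r (p + 0))
      rw [hhdef]
      show A 0 - Real.sqrt (G r (p + 0)) = _
      rw [hA0, add_zero, intervalIntegral.integral_same]
      ring
    · show h σ = u - (∫ ξ in p..(p + σ), fhat ξ) - Real.sqrt (G r (p + σ))
      rw [hhdef]
      show A σ - Real.sqrt (G r (p + σ)) = _
      rw [hAr σ hlt, hIeq σ hσ]
  -- quantitative comparison
  have hCm : (2 + K') * δ < m * (C * δ) / (2 * S) := by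
    rw [lt_div_iff₀ (by positivity)]
    have h1 : ((2 + K') * (2 * S)) * δ < (C * m) * δ := mul_lt_mul_of_pos_right hCbig hδ
    calc (2 + K') * δ * (2 * S) = ((2 + K') * (2 * S)) * δ := by ring
      _ < (C * m) * δ := h1
      _ = m * (C * δ) := by ring
  -- existence of σ1
  obtain ⟨σ1, hs1a, hs1b, hs1val⟩ :
      ∃ σ1, -(C * δ) ≤ σ1 ∧ σ1 ≤ C * δ ∧ h σ1 = v := by
    rcases le_or_gt v (h 0) with hcase | hcase
    · have hdrop := hdec (C * δ) (by positivity) le_rfl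
      have hb : h (C * δ) ≤ v := by
        have h2 := (abs_le.1 hh0v).2
        linarith
      obtain ⟨σ1, hσ1mem, hσ1⟩ :=
        intermediate_value_Icc' (by positivity : (0:ℝ) ≤ C * δ) hcont1 ⟨hb, hcase⟩
      exact ⟨σ1, by linarith [hσ1mem.1], hσ1mem.2, hσ1⟩
    · have hraise := hinc (C * δ) (by positivity) le_rfl
      have hb : v ≤ h (-(C * δ)) := by
        have h2 := (abs_le.1 hh0v).1
        linarith
      obtain ⟨σ1, hσ1mem, hσ1⟩ :=
        intermediate_value_Icc' (by linarith : -(C * δ) ≤ (0:ℝ)) hcont2 ⟨hcase.le, hb⟩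
      exact ⟨σ1, hσ1mem.1, by linarith [hσ1mem.2], hσ1⟩
  have hκmid : κ < p + σ1 := by linarith
  have hPhi1eq : ∀ σ : ℝ, Phi1 𝒯 σ (p, u) = (p + σ, A σ) := by
    intro σ
    rw [hAdef]
    exact Prod.ext_iff.2 ⟨Phi1_fst 𝒯 σ (p, u), rfl⟩
  refine ⟨(σ1, r - (p + σ1)), ⟨?_, ?_, ?_, ?_⟩, ?_⟩
  · exact abs_le.2 ⟨hs1a, hs1b⟩
  · show r - (p + σ1) < 0
    linarith
  · show (r, v) = Phi2 𝒯 (r - (p + σ1)) (Phi1 𝒯 σ1 (p, u))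
    rw [hPhi1eq σ1]
    unfold Phi2
    rw [if_pos (show r - (p + σ1) < 0 by linarith)]
    have e2 : (𝒯 (p + σ1 + (r - (p + σ1))) - 𝒯 (p + σ1)) * (-(r - (p + σ1)))
        = G r (p + σ1) := by
      have e1 : p + σ1 + (r - (p + σ1)) = r := by ring
      rw [e1, hGdef]
      ring
    have hh1 : h σ1 = A σ1 - Real.sqrt (G r (p + σ1)) := by rw [hhdef]
    apply Prod.ext_iff.2
    constructor
    · show r = p + σ1 + (r - (p + σ1))
      ring
    · show v = A σ1 - Real.sqrt ((𝒯 (p + σ1 + (r - (p + σ1))) - 𝒯 (p + σ1)) * (-(r - (p + σ1))))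
      rw [e2, ← hh1, hs1val]
  · show κ < (Phi1 𝒯 σ1 (p, u)).1
    rw [Phi1_fst]
    exact hκmid
  · rintro ⟨s1, s2⟩ ⟨habs1, hs2neg, heq, hmid⟩
    simp only at habs1 hs2neg hmid
    have habs1' := abs_le.1 habs1
    have hfsteq : r = p + s1 + s2 := by
      have h1 : ((r, v) : ℝ × ℝ).1 = (Phi2 𝒯 s2 (Phi1 𝒯 s1 (p, u))).1 := congrArg Prod.fst heq
      rw [Phi2_fst, Phi1_fst] at h1
      exact h1
    have hmid' : κ < p + s1 := by
      rw [Phi1_fst] at hmid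
      exact hmid
    have hvals : h s1 = v := by
      have h2 : ((r, v) : ℝ × ℝ).2 = (Phi2 𝒯 s2 (Phi1 𝒯 s1 (p, u))).2 := congrArg Prod.snd heq
      rw [hPhi1eq s1] at h2
      unfold Phi2 at h2
      rw [if_pos hs2neg] at h2
      simp only at h2
      have e2 : (𝒯 (p + s1 + s2) - 𝒯 (p + s1)) * (-s2) = G r (p + s1) := by
        have e1 : p + s1 + s2 = r := by linarith
        have e3 : -s2 = p + s1 - r := by linarith
        rw [e1, e3, hGdef]
      rw [e2] at h2
      rw [hhdef]
      exact h2.symm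
    have hseq : s1 = σ1 := by
      rcases lt_trichotomy s1 σ1 with hl | heq' | hg
      · have := hhanti s1 σ1 habs1'.1 hl
        rw [hvals, hs1val] at this
        linarith
      · exact heq'
      · have := hhanti σ1 s1 hs1a hg
        rw [hvals, hs1val] at this
        linarith
    exact Prod.ext_iff.2 ⟨hseq, by simp only; linarith⟩


set_option maxHeartbeats 1600000 in
/-- Unique solvability of the Riemann problem across the congested/free interface: for
states `U^ℓ` `δ`-close to the congested reference state `(p₀₁,u₀₁)` and `U^r` `δ`-close to
the free reference state `(p₀₂^ε,u₀₂^ε)`, there is a unique pair of wave strengths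
`(σ₁,σ₂)` with `|σ₁| ≤ Cδ`, `σ₂ < 0`, such that `U^r = Φ₂^ε(σ₂)(Φ₁^ε(σ₁)(U^ℓ))` and the
intermediate state is congested (pressure `> κ`). -/
theorem stmt13 (κ γi γc p01 p02 u01 u02 : ℝ)
    (hκ : 0 < κ) (hγi : 1 < γi) (hγc : 1 < γc)
    (hp02 : 0 < p02) (h1 : p02 < κ) (h2 : κ < p01) (hu : u02 < u01)
    (hRH : (p01 - p02) * ((κ / p02) ^ (1 / γi) - 1) = (u01 - u02) ^ 2)
    (T : ℝ → ℝ → ℝ)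
    (hT : ∀ ε > (0:ℝ), ∀ p > (0:ℝ), 1 < T ε p ∧ Pe κ γi γc ε (T ε p) = p)
    (p02e u02e : ℝ → ℝ)
    (hp02e : ∀ ε > (0:ℝ), 0 < p02e ε ∧ p02e ε < κ)
    (hp02conv : Tendsto p02e (nhdsWithin 0 (Ioi 0)) (nhds p02))
    (hu02e : ∀ ε > (0:ℝ),
      u02e ε = u01 - Real.sqrt ((T ε (p02e ε) - T ε p01) * (p01 - p02e ε))) :
    ∃ δ εb C : ℝ, 0 < δ ∧ 0 < εb ∧ 0 < C ∧
      ∀ ε, 0 < ε → ε < εb →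
        ∀ Ul Ur : ℝ × ℝ,
          |Ul.1 - p01| < δ → |Ul.2 - u01| < δ →
          |Ur.1 - p02e ε| < δ → |Ur.2 - u02e ε| < δ →
          ∃! σ : ℝ × ℝ, |σ.1| ≤ C * δ ∧ σ.2 < 0 ∧
            Ur = Phi2 (T ε) σ.2 (Phi1 (T ε) σ.1 Ul) ∧
            κ < (Phi1 (T ε) σ.1 Ul).1 := by
  have hγi0 : 0 < γi := by linarith
  have hγc0 : 0 < γc := by linarith
  set dκ : ℝ := (κ - p02) / 4 with hdκdef
  have hdκ0 : 0 < dκ := by rw [hdκdef]; linarith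
  set pmin : ℝ := p02 / 4 with hpmindef
  have hpmin0 : 0 < pmin := by rw [hpmindef]; linarith
  have hden : 0 < κ - 2 * dκ := by rw [hdκdef]; linarith
  have hX : 1 < κ / (κ - 2 * dκ) := by
    rw [lt_div_iff₀ hden]
    rw [hdκdef]; linarith
  set m : ℝ := ((κ / (κ - 2 * dκ)) ^ (1 / γi) - 1) / 2 with hmdef
  have hrpX : 1 < (κ / (κ - 2 * dκ)) ^ (1 / γi) :=
    (Real.one_lt_rpow_iff_of_pos (by positivity)).2 (Or.inl ⟨hX, by positivity⟩)
  have hm0 : 0 < m := by rw [hmdef]; linarith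
  set B : ℝ := max ((2 * κ / pmin) ^ (1 / γi)) (max (1 + (2 / pmin) ^ (1 / γc)) 2) with hBdef
  have hB2 : (2:ℝ) ≤ B := le_trans (le_max_right _ _) (le_max_right _ _)
  have hB1 : (1:ℝ) ≤ B := by linarith
  have hB0 : (0:ℝ) < B := by linarith
  set L : ℝ := B ^ (γi + 1) / (κ * γi) with hLdef
  have hL0 : 0 < L := by rw [hLdef]; positivity
  set K : ℝ := 2 * L * (p01 + 2) + 2 * B with hKdef
  have hgmin0 : 0 < m * (2 * dκ) := by positivity
  set K' : ℝ := K / (2 * Real.sqrt (m * (2 * dκ))) with hK'def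
  have hK0 : 0 < K := by
    rw [hKdef]
    nlinarith [mul_pos (mul_pos (show (0:ℝ) < 2 by norm_num) hL0)
      (show (0:ℝ) < p01 + 2 by linarith)]
  have hK'0 : 0 < K' := by rw [hK'def]; positivity
  set S : ℝ := Real.sqrt (B * (p01 + 2)) with hSdef
  have hS0 : 0 < S := by
    rw [hSdef]; exact Real.sqrt_pos.2 (mul_pos hB0 (by linarith))
  set C : ℝ := max 1 ((2 + K') * (2 * S) / m + 1) with hCdef
  have hC1 : (1:ℝ) ≤ C := le_max_left _ _
  have hC0 : (0:ℝ) < C := by linarith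
  have hCbig : (2 + K') * (2 * S) < C * m := by
    have h1' : (2 + K') * (2 * S) / m + 1 ≤ C := le_trans (le_max_right _ _) le_rfl
    have hmul := mul_le_mul_of_nonneg_right h1' hm0.le
    rw [add_mul, div_mul_cancel₀ _ hm0.ne', one_mul] at hmul
    linarith
  set δ : ℝ := min (min dκ pmin) (min (1 / (C + 1)) ((p01 - κ) / (2 * (C + 1)))) with hδdef
  have hδ0 : 0 < δ := by
    rw [hδdef]
    apply lt_min (lt_min hdκ0 hpmin0)
    apply lt_min (by positivity)
    have : 0 < p01 - κ := by linarith
    positivity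
  have hδdκ : δ ≤ dκ := le_trans (min_le_left _ _) (min_le_left _ _)
  have hδpmin : δ ≤ pmin := le_trans (min_le_left _ _) (min_le_right _ _)
  have hδC : δ ≤ 1 / (C + 1) := le_trans (min_le_right _ _) (min_le_left _ _)
  have hδP : δ ≤ (p01 - κ) / (2 * (C + 1)) := le_trans (min_le_right _ _) (min_le_right _ _)
  have hPK : κ < p01 - (C + 1) * δ := by
    have hmul := mul_le_mul_of_nonneg_left hδP (by linarith : (0:ℝ) ≤ C + 1)
    have e : (C + 1) * ((p01 - κ) / (2 * (C + 1))) = (p01 - κ) / 2 := by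
      field_simp
    rw [e] at hmul
    linarith
  have hCδ2 : (C + 1) * δ ≤ 2 := by
    have hmul := mul_le_mul_of_nonneg_left hδC (by linarith : (0:ℝ) ≤ C + 1)
    rw [mul_one_div, div_self (by linarith : C + 1 ≠ 0)] at hmul
    linarith
  set ε₁ : ℝ := κ * (1 - (1 + m) ^ (-γi)) * m ^ γc with hε₁def
  have hε₁0 : 0 < ε₁ := by
    have c3 : (1 + m) ^ (-γi) < 1 :=
      Real.rpow_lt_one_of_one_lt_of_neg (by linarith) (by linarith)
    have c4 : 0 < m ^ γc := Real.rpow_pos_of_pos hm0 _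
    rw [hε₁def]
    have : 0 < 1 - (1 + m) ^ (-γi) := by linarith
    positivity
  set ρ : ℝ := min dκ (p02 / 4) with hρdef
  have hρ0 : 0 < ρ := lt_min hdκ0 (by linarith)
  obtain ⟨ε₂, hε₂0, hε₂⟩ := Metric.tendsto_nhdsWithin_nhds.1 hp02conv ρ hρ0
  refine ⟨δ, min 1 (min ε₁ ε₂), C, hδ0, lt_min one_pos (lt_min hε₁0 hε₂0), hC0, ?_⟩
  intro ε hε hεb Ul Ur hUl1 hUl2 hUr1 hUr2
  have hε1 : ε < 1 := lt_of_lt_of_le hεb (min_le_left _ _)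
  have hεε₁ : ε < ε₁ := lt_of_lt_of_le hεb (le_trans (min_le_right _ _) (min_le_left _ _))
  have hεε₂ : ε < ε₂ := lt_of_lt_of_le hεb (le_trans (min_le_right _ _) (min_le_right _ _))
  have h𝒯 := hT ε hε
  have hρe : |p02e ε - p02| < ρ := by
    have := hε₂ (mem_Ioi.2 hε) (by rw [Real.dist_eq, sub_zero, abs_of_pos hε]; exact hεε₂)
    rwa [Real.dist_eq] at this
  have hρe' := abs_lt.1 hρe
  have hρdκ : ρ ≤ dκ := min_le_left _ _
  have hρp : ρ ≤ p02 / 4 := min_le_right _ _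
  -- bounds hypothesis hB for T ε
  have hBall : ∀ p, pmin ≤ p → T ε p ≤ B := by
    intro p hp
    have hp0 : 0 < p := lt_of_lt_of_le hpmin0 hp
    apply T_ub hκ hγi hγc hε h𝒯 hp0
    · have c2 : (2 * ε / p) ^ (1 / γc) ≤ (2 / pmin) ^ (1 / γc) := by
        apply Real.rpow_le_rpow (by positivity) _ (by positivity)
        exact div_le_div₀ (by linarith) (by linarith) hpmin0 hp
      have : 1 + (2 / pmin) ^ (1 / γc) ≤ B :=
        le_trans (le_max_left _ _) (le_max_right _ _)
      linarith
    · have c1 : (2 * κ / p) ^ (1 / γi) ≤ (2 * κ / pmin) ^ (1 / γi) := by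
        apply Real.rpow_le_rpow (by positivity) _ (by positivity)
        exact div_le_div₀ (by linarith) le_rfl hpmin0 hp
      exact le_trans c1 (le_max_left _ _)
  -- apply the key lemma
  apply main_key (T ε) κ p01 u01 (p02e ε) (u02e ε) pmin dκ m B L K C δ hκ hdκ0 hm0 hB1
    hL0.le hpmin0
  · exact fun p hp => (h𝒯 p hp).1
  · exact fun p q hp hpq => T_anti hκ hγi hγc hε h𝒯 hp hpq
  · exact fun p hp => T_cont hκ hγi hγc hε h𝒯 hp
  · exact fun p hp => T_sqrt_deriv_cont hκ hγi hγc hε h𝒯 hp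
  · exact hBall
  · exact fun p q hp hpq => T_lip hκ hγi hγc hε h𝒯 hpmin0 hBall hLdef hp hpq
  · intro p hp1 hp2
    have hp0 : 0 < p := lt_of_lt_of_le hpmin0 hp1
    have e1 : 1 + 2 * m = (κ / (κ - 2 * dκ)) ^ (1 / γi) := by rw [hmdef]; ring
    have e2 : (κ / (κ - 2 * dκ)) ^ (1 / γi) ≤ (κ / p) ^ (1 / γi) := by
      apply Real.rpow_le_rpow (by positivity) _ (by positivity)
      exact div_le_div₀ hκ.le le_rfl hp0 hp2
    have e3 := T_lb hκ hγi hγc hε h𝒯 hp0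
    linarith
  · exact T_kb hκ hγi hγc hε h𝒯 hm0 (by rw [← hε₁def]; exact hεε₁)
  · exact hu02e ε hε
  · rw [hpmindef]; linarith
  · rw [hdκdef]; linarith
  · exact hδ0
  · exact hC1
  · exact hPK
  · exact hCδ2
  · exact hKdef
  · exact hCbig
  · exact hUl1
  · exact hUl2
  · exact hUr1
  · exact hUr2
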